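/- Let n, d₀ ≥ 1 be positive integers. Then there exists a positive integer D₀ (one may take D₀ = 4·Nₙ·d₁ for suitable explicit constants) such that for any n-dimensional rectangle R ⊆ ℤⁿ with side length at least D₀ in every direction, there is a subset M ⊆ R satisfying: (1) for any distinct x, y ∈ M, ρ(x,y) ≥ d₀ in the sup metric; (2) for every 1 ≤ i ≤ n and every x ∈ R, there exists a_i ∈ ℤ with x + a_i·e_i ∈ M. -/

import Mathlib

/-- The sup metric on `ℤⁿ`, valued in `ℕ`. -/
def rho {n : ℕ} (x y : Fin n → ℤ) : ℕ := Finset.univ.sup fun i => (x i - y i).natAbs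

/-- A generalized `n`-dimensional rectangle `[a₁,b₁] × ⋯ × [aₙ,bₙ]` in `ℤⁿ`. -/
def genRect {n : ℕ} (a b : Fin n → ℤ) : Set (Fin n → ℤ) := {x | ∀ i, a i ≤ x i ∧ x i ≤ b i}

/-- Uniqueness of balanced base-`q` representations. -/
lemma digitsZero (q : ℤ) : ∀ N (δ : ℕ → ℤ), (∀ j, 2 * |δ j| < q) →
    (∑ j ∈ Finset.range N, δ j * q ^ j) = 0 → ∀ j < N, δ j = 0 := by
  intro N
  induction N with
  | zero => intro δ _ _ j hj; omega
  | succ N ih =>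
    intro δ hδ hsum j hj
    have hq : 0 < q := lt_of_le_of_lt (by positivity) (hδ 0)
    rw [Finset.sum_range_succ'] at hsum
    have hdvds : q ∣ ∑ j ∈ Finset.range N, δ (j + 1) * q ^ (j + 1) :=
      Finset.dvd_sum fun k _ => Dvd.dvd.mul_left (dvd_pow_self q (Nat.succ_ne_zero k)) _
    have h0 : δ 0 = 0 := by
      have hdvd : q ∣ δ 0 := by
        have : δ 0 = -(∑ j ∈ Finset.range N, δ (j + 1) * q ^ (j + 1)) := by
          have := hsum; simp at this ⊢; linarith
        rw [this]; exact dvd_neg.mpr hdvds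
      have habs : |δ 0| < q := by have := hδ 0; have := abs_nonneg (δ 0); omega
      exact Int.eq_zero_of_abs_lt_dvd hdvd habs
    have hrest : (∑ j ∈ Finset.range N, δ (j + 1) * q ^ j) = 0 := by
      have h1 : (∑ j ∈ Finset.range N, δ (j + 1) * q ^ j) * q = 0 := by
        rw [Finset.sum_mul]
        have : ∀ j, δ (j + 1) * q ^ j * q = δ (j + 1) * q ^ (j + 1) := by
          intro j; ring
        simp_rw [this]
        simp [h0] at hsum; exact hsum
      exact (mul_eq_zero.mp h1).resolve_right (by omega)
    rcases Nat.eq_zero_or_pos j with rfl | hjpos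
    · exact h0
    · obtain ⟨k, rfl⟩ := Nat.exists_eq_add_of_lt hjpos
      simp only [Nat.add_comm 0 k]
      exact ih (fun j => δ (j + 1)) (fun j => hδ (j + 1)) hrest k (by omega)

/-- In an interval of length ≥ m one finds every residue mod m. -/
lemma existsResidue (m lo hi r : ℤ) (hm : 0 < m) (h : lo + m ≤ hi + 1) :
    ∃ c : ℤ, lo ≤ c ∧ c ≤ hi ∧ m ∣ (c - r) := by
  refine ⟨lo + (r - lo) % m, ?_, ?_, ?_⟩
  · have := Int.emod_nonneg (r - lo) (by omega : m ≠ 0); omega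
  · have := Int.emod_lt_of_pos (r - lo) hm; omega
  · have : lo + (r - lo) % m - r = -(m * ((r - lo) / m)) := by
      rw [Int.emod_def]; ring
    rw [this]; exact dvd_neg.mpr ⟨_, rfl⟩

theorem stmt3 (n d₀ : ℕ) (hn : 1 ≤ n) (hd : 1 ≤ d₀) :
    ∃ D₀ : ℕ, 0 < D₀ ∧
      ∀ a b : Fin n → ℤ, (∀ i, (D₀ : ℤ) ≤ b i - a i) →
        ∃ M ⊆ genRect a b,
          (∀ x ∈ M, ∀ y ∈ M, x ≠ y → d₀ ≤ rho x y) ∧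
          (∀ i : Fin n, ∀ x ∈ genRect a b,
            ∃ c : ℤ, x + c • (Pi.single i 1 : Fin n → ℤ) ∈ M) := by
  set q : ℤ := 2 * (d₀ : ℤ) - 1 with hqdef
  have hq1 : 1 ≤ q := by simp [hqdef]; omega
  set m : ℤ := q ^ n + 1 with hmdef
  have hqn : 0 < q ^ n := pow_pos (by omega) n
  have hm : 0 < m := by omega
  refine ⟨m.toNat, by omega, ?_⟩
  have hcast : (m.toNat : ℤ) = m := Int.toNat_of_nonneg (by omega)
  intro a b hab
  rw [hcast] at hab
  set S : (Fin n → ℤ) → ℤ := fun x => ∑ j : Fin n, q ^ (j : ℕ) * x j with hSdef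
  refine ⟨{x | x ∈ genRect a b ∧ m ∣ S x}, fun x hx => hx.1, ?_, ?_⟩
  · -- separation
    intro x hx y hy hne
    by_contra hlt
    push_neg at hlt
    have hsup : rho x y < d₀ := by omega
    have hcoord : ∀ i, (x i - y i).natAbs < d₀ := by
      intro i
      have hbot : (⊥ : ℕ) < d₀ := by simpa using (by omega : 0 < d₀)
      exact (Finset.sup_lt_iff hbot).mp hsup i (Finset.mem_univ i)
    set δ : ℕ → ℤ := fun j => if h : j < n then x ⟨j, h⟩ - y ⟨j, h⟩ else 0 with hδdef
    have hδb : ∀ j, 2 * |δ j| < q := by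
      intro j
      by_cases h : j < n
      · simp only [hδdef, dif_pos h]
        have := hcoord ⟨j, h⟩
        rw [Int.abs_eq_natAbs]
        omega
      · simp only [hδdef, dif_neg h]; simpa using by omega
    have hsum : ∑ j ∈ Finset.range n, δ j * q ^ j = S x - S y := by
      rw [← Fin.sum_univ_eq_sum_range (fun j => δ j * q ^ j) n]
      simp only [hSdef, ← Finset.sum_sub_distrib]
      refine Finset.sum_congr rfl fun j _ => ?_
      simp only [hδdef, dif_pos j.isLt, Fin.eta]
      ring
    have hdvd : m ∣ S x - S y := dvd_sub hx.2 hy.2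
    have hbound : 2 * |S x - S y| ≤ q ^ n - 1 := by
      rw [← hsum]
      calc 2 * |∑ j ∈ Finset.range n, δ j * q ^ j|
          ≤ 2 * ∑ j ∈ Finset.range n, |δ j * q ^ j| := by
            have := Finset.abs_sum_le_sum_abs (fun j => δ j * q ^ j) (Finset.range n)
            omega
        _ = ∑ j ∈ Finset.range n, (2 * |δ j|) * q ^ j := by
            rw [Finset.mul_sum]
            refine Finset.sum_congr rfl fun j _ => ?_
            rw [abs_mul, abs_pow, abs_of_nonneg (by omega : (0:ℤ) ≤ q)]
            ring
        _ ≤ ∑ j ∈ Finset.range n, (q - 1) * q ^ j := by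
            exact Finset.sum_le_sum fun j _ => mul_le_mul_of_nonneg_right
              (by have := hδb j; omega) (pow_nonneg (by omega) j)
        _ = q ^ n - 1 := by
            rw [← geom_sum_mul q n, Finset.sum_mul]
            exact Finset.sum_congr rfl fun j _ => mul_comm _ _
    have hzero : S x - S y = 0 := by
      refine Int.eq_zero_of_abs_lt_dvd hdvd ?_
      omega
    rw [← hsum] at hzero
    have := digitsZero q n δ hδb hzero
    apply hne
    funext j
    have := this j j.isLt
    simp only [hδdef, dif_pos j.isLt, Fin.eta] at this
    omega
  · -- coverage
    intro i x hx
    obtain ⟨c, hc1, hc2, hc3⟩ := existsResidue m (a i - x i) (b i - x i)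
      (S x * q ^ (n - (i : ℕ))) hm (by have := hab i; omega)
    refine ⟨c, ?_, ?_⟩
    · intro j
      rcases eq_or_ne j i with rfl | hji
      · simp only [Pi.add_apply, Pi.smul_apply, Pi.single_eq_same, smul_eq_mul, mul_one]
        omega
      · simp only [Pi.add_apply, Pi.smul_apply, Pi.single_eq_of_ne hji, smul_eq_mul, mul_zero,
          add_zero]
        exact hx j
    · have hSy : S (x + c • (Pi.single i 1 : Fin n → ℤ)) = S x + q ^ (i : ℕ) * c := by
        simp only [hSdef, Pi.add_apply, Pi.smul_apply, smul_eq_mul, mul_add,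
          Finset.sum_add_distrib]
        congr 1
        rw [Finset.sum_eq_single i]
        · simp
        · intro j _ hji
          rw [Pi.single_eq_of_ne hji]; ring
        · intro h; exact absurd (Finset.mem_univ i) h
      rw [hSy]
      have key : S x + q ^ (i : ℕ) * c
          = S x * m + q ^ (i : ℕ) * (c - S x * q ^ (n - (i : ℕ))) := by
        have hexp : q ^ (i : ℕ) * q ^ (n - (i : ℕ)) = q ^ n := by
          rw [← pow_add]
          congr 1
          omega
        have h2 : q ^ (i : ℕ) * (S x * q ^ (n - (i : ℕ))) = S x * q ^ n := by
          rw [← hexp]; ring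
        rw [hmdef]
        linear_combination h2
      rw [key]
      exact dvd_add ⟨S x, mul_comm _ _⟩ (Dvd.dvd.mul_left hc3 _)
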